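/- Let d ∈ (0,1), let s ≥ 1 be an integer, and let a > d be a real number (so that a − d > 0). Then the (convergent) improper integral ∫₀¹ θ^(−1−d) [(1−θ)^(a−1) − (1−θ)^(a+s−1)] dθ equals (Γ(1−d)/d)·[Γ(a+s)/Γ(a+s−d) − Γ(a)/Γ(a−d)]. In particular, taking a = α + d + (k−1)s, the size-biased rate for the beta process with the negative binomial likelihood with s failures equals (γ/d)·(Γ(α+1)/Γ(α+d))·[Γ(α+d+ks)/Γ(α+ks) − Γ(α+d+(k−1)s)/Γ(α+(k−1)s)]. -/

import Mathlib

open Real MeasureTheory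

lemma myBeta_cast {x : ℝ} (h0 : 0 ≤ x) (h1 : x ≤ 1) (u v : ℝ) :
    (x:ℂ) ^ ((u:ℂ)-1) * (1-(x:ℂ)) ^ ((v:ℂ)-1) = ((x ^ (u-1) * (1-x) ^ (v-1) : ℝ) : ℂ) := by
  rw [Complex.ofReal_mul, Complex.ofReal_cpow h0, Complex.ofReal_cpow (by linarith)]
  push_cast
  rfl

lemma myBeta_eq_complex (u v : ℝ) :
    Complex.betaIntegral u v = ((∫ x in (0:ℝ)..1, x ^ (u-1) * (1-x) ^ (v-1) : ℝ) : ℂ) := by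
  rw [Complex.betaIntegral, ← intervalIntegral.integral_ofReal]
  refine intervalIntegral.integral_congr fun x hx => ?_
  rw [Set.uIcc_of_le (by norm_num : (0:ℝ) ≤ 1)] at hx
  exact myBeta_cast hx.1 hx.2 u v

lemma myBeta_integrable {u v : ℝ} (hu : 0 < u) (hv : 0 < v) :
    IntervalIntegrable (fun x : ℝ => x ^ (u-1) * (1-x) ^ (v-1)) volume 0 1 := by
  have h := Complex.betaIntegral_convergent (u := u) (v := v) (by simpa) (by simpa)
  have h2 : IntervalIntegrable
      (fun x : ℝ => ((x:ℂ) ^ ((u:ℂ)-1) * ((1:ℂ)-(x:ℂ)) ^ ((v:ℂ)-1)).re) volume 0 1 :=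
    ⟨Complex.reCLM.integrable_comp h.1, Complex.reCLM.integrable_comp h.2⟩
  refine h2.congr ?_
  rw [Set.uIoc_of_le (by norm_num : (0:ℝ) ≤ 1)]
  intro x hx
  simp only []
  rw [myBeta_cast hx.1.le hx.2 u v, Complex.ofReal_re]

lemma myBeta (u v : ℝ) (hu : 0 < u) (hv : 0 < v) :
    ∫ x in (0:ℝ)..1, x ^ (u-1) * (1-x) ^ (v-1) = Gamma u * Gamma v / Gamma (u+v) := by
  have h := Complex.Gamma_mul_Gamma_eq_betaIntegral (s := (u:ℂ)) (t := (v:ℂ))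
    (by simpa) (by simpa)
  rw [myBeta_eq_complex, ← Complex.ofReal_add, Complex.Gamma_ofReal, Complex.Gamma_ofReal,
    Complex.Gamma_ofReal, ← Complex.ofReal_mul, ← Complex.ofReal_mul] at h
  have h2 := Complex.ofReal_injective h
  have hne : Gamma (u+v) ≠ 0 := (Gamma_pos_of_pos (by linarith)).ne'
  field_simp
  linarith [h2]

lemma myPointwise (d a : ℝ) (hd0 : 0 < d) (hd1 : d < 1) (ha : d < a) (s : ℕ) (hs : 1 ≤ s)
    {θ : ℝ} (h0 : 0 ≤ θ) (h1 : θ ≤ 1) :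
    θ ^ (-1 - d) * ((1 - θ) ^ (a - 1) - (1 - θ) ^ (a + (s : ℝ) - 1))
      = ∑ j ∈ Finset.range s, θ ^ (1 - d - 1) * (1 - θ) ^ (a + (j : ℝ) - 1) := by
  have ha0 : 0 < a := hd0.trans ha
  rcases eq_or_lt_of_le h0 with h0 | h0
  · simp [← h0, Real.zero_rpow (show -1 - d ≠ 0 by linarith),
      Real.zero_rpow (show 1 - d - 1 ≠ 0 by linarith),
      Real.zero_rpow (show -d ≠ 0 by linarith)]
  rcases eq_or_lt_of_le h1 with h1 | h1
  · rw [h1]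
    rw [Finset.sum_eq_single_of_mem 0 (Finset.mem_range.mpr hs) (fun b _ hb => by
      have hb1 : (1:ℝ) ≤ (b:ℝ) := by exact_mod_cast Nat.one_le_iff_ne_zero.mpr hb
      simp [Real.zero_rpow (show a + (b:ℝ) - 1 ≠ 0 by linarith)])]
    have hs1 : (1:ℝ) ≤ (s:ℝ) := by exact_mod_cast hs
    rw [show (1:ℝ) - 1 = 0 by norm_num, Real.one_rpow, Real.one_rpow,
      Real.zero_rpow (show a + (s:ℝ) - 1 ≠ 0 by linarith)]
    norm_num
  · have ht : (0:ℝ) < 1 - θ := by linarith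
    have key : ∀ j : ℕ, (1-θ) ^ (a + (j:ℝ) - 1) = (1-θ) ^ (a-1) * (1-θ) ^ j := fun j => by
      rw [← Real.rpow_natCast (1-θ) j, ← Real.rpow_add ht]
      congr 1; ring
    have hts : (1-θ) ^ (a + (s:ℝ) - 1) = (1-θ) ^ (a-1) * (1-θ) ^ s := key s
    have hgeom : (1:ℝ) - (1-θ) ^ s = θ * ∑ j ∈ Finset.range s, (1-θ) ^ j := by
      linear_combination geom_sum_mul (1-θ) s
    have hpow : θ ^ (1 - d - 1) = θ ^ (-1 - d) * θ := by
      rw [show (1:ℝ) - d - 1 = -1 - d + 1 by ring, Real.rpow_add h0, Real.rpow_one]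
    calc θ ^ (-1 - d) * ((1 - θ) ^ (a - 1) - (1 - θ) ^ (a + (s : ℝ) - 1))
        = θ ^ (-1 - d) * ((1-θ) ^ (a-1) * (1 - (1-θ) ^ s)) := by rw [hts]; ring
      _ = θ ^ (1 - d - 1) * ((1-θ) ^ (a-1) * ∑ j ∈ Finset.range s, (1-θ) ^ j) := by
          rw [hgeom, hpow]; ring
      _ = ∑ j ∈ Finset.range s, θ ^ (1 - d - 1) * (1 - θ) ^ (a + (j : ℝ) - 1) := by
          simp only [Finset.mul_sum]
          refine Finset.sum_congr rfl fun j _ => ?_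
          rw [key j]

lemma myTel (d a : ℝ) (hd0 : 0 < d) (hd1 : d < 1) (ha : d < a) (j : ℕ) :
    Gamma (1-d) * Gamma (a + (j:ℝ)) / Gamma (1 - d + (a + (j:ℝ)))
      = Gamma (1-d) / d * (Gamma (a + ((j:ℝ)+1)) / Gamma (a + ((j:ℝ)+1) - d)
          - Gamma (a + (j:ℝ)) / Gamma (a + (j:ℝ) - d)) := by
  have hj : (0:ℝ) ≤ (j:ℝ) := Nat.cast_nonneg j
  have hx : (0:ℝ) < a + (j:ℝ) := by linarith [hd0.trans ha]
  have hy : (0:ℝ) < a + (j:ℝ) - d := by linarith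
  have e1 : a + ((j:ℝ)+1) = (a + (j:ℝ)) + 1 := by ring
  have e2 : a + ((j:ℝ)+1) - d = (a + (j:ℝ) - d) + 1 := by ring
  have e3 : 1 - d + (a + (j:ℝ)) = (a + (j:ℝ) - d) + 1 := by ring
  rw [e2, e1, e3, Real.Gamma_add_one hx.ne', Real.Gamma_add_one hy.ne']
  have g1 : Gamma (a + (j:ℝ)) ≠ 0 := (Gamma_pos_of_pos hx).ne'
  have g2 : Gamma (a + (j:ℝ) - d) ≠ 0 := (Gamma_pos_of_pos hy).ne'
  field_simp
  ring

lemma myPart1 (d : ℝ) (hd0 : 0 < d) (hd1 : d < 1) (s : ℕ) (hs : 1 ≤ s)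
    (a : ℝ) (ha : d < a) :
    ∫ θ in (0:ℝ)..1, θ ^ (-1 - d) * ((1 - θ) ^ (a - 1) - (1 - θ) ^ (a + (s : ℝ) - 1))
      = Real.Gamma (1 - d) / d *
          (Real.Gamma (a + (s : ℝ)) / Real.Gamma (a + (s : ℝ) - d)
            - Real.Gamma a / Real.Gamma (a - d)) := by
  have ha0 : 0 < a := hd0.trans ha
  rw [intervalIntegral.integral_congr (g := fun θ =>
      ∑ j ∈ Finset.range s, θ ^ (1 - d - 1) * (1 - θ) ^ (a + (j:ℝ) - 1))
    (fun θ hθ => by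
      rw [Set.uIcc_of_le (by norm_num : (0:ℝ) ≤ 1)] at hθ
      exact myPointwise d a hd0 hd1 ha s hs hθ.1 hθ.2)]
  rw [intervalIntegral.integral_finset_sum
    (f := fun (j : ℕ) (θ : ℝ) => θ ^ (1 - d - 1) * (1 - θ) ^ (a + (j:ℝ) - 1))
    (fun j _ =>
      myBeta_integrable (u := 1 - d) (v := a + (j:ℝ)) (by linarith) (by positivity))]
  have hterm : ∀ j ∈ Finset.range s,
      (∫ θ in (0:ℝ)..1, θ ^ (1 - d - 1) * (1 - θ) ^ (a + (j:ℝ) - 1))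
        = Gamma (1-d) / d * (Gamma (a + ((j:ℝ)+1)) / Gamma (a + ((j:ℝ)+1) - d)
            - Gamma (a + (j:ℝ)) / Gamma (a + (j:ℝ) - d)) := fun j _ => by
    rw [myBeta (1-d) (a + (j:ℝ)) (by linarith) (by positivity)]
    exact myTel d a hd0 hd1 ha j
  rw [Finset.sum_congr rfl hterm]
  have := Finset.sum_range_sub (f := fun n : ℕ =>
    Gamma (a + (n:ℝ)) / Gamma (a + (n:ℝ) - d)) s
  calc ∑ j ∈ Finset.range s, Gamma (1-d) / d *
          (Gamma (a + ((j:ℝ)+1)) / Gamma (a + ((j:ℝ)+1) - d)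
            - Gamma (a + (j:ℝ)) / Gamma (a + (j:ℝ) - d))
      = Gamma (1-d) / d * ∑ j ∈ Finset.range s,
          (Gamma (a + ((j+1:ℕ):ℝ)) / Gamma (a + ((j+1:ℕ):ℝ) - d)
            - Gamma (a + (j:ℝ)) / Gamma (a + (j:ℝ) - d)) := by
        rw [← Finset.mul_sum]
        congr 1
        refine Finset.sum_congr rfl fun j _ => by push_cast; ring_nf
    _ = Gamma (1-d) / d * (Gamma (a + (s:ℝ)) / Gamma (a + (s:ℝ) - d)
          - Gamma a / Gamma (a - d)) := by
        rw [this]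
        norm_num

/-- For `d ∈ (0,1)`, an integer `s ≥ 1` and `a > d`, the improper integral
`∫₀¹ θ^(-1-d) [(1-θ)^(a-1) - (1-θ)^(a+s-1)] dθ` equals
`(Γ(1-d)/d)·[Γ(a+s)/Γ(a+s-d) - Γ(a)/Γ(a-d)]`.  In particular, with
`a = α + d + (k-1)s`, the size-biased rate for the beta process with the
negative binomial likelihood with `s` failures equals
`(γ/d)·(Γ(α+1)/Γ(α+d))·[Γ(α+d+ks)/Γ(α+ks) - Γ(α+d+(k-1)s)/Γ(α+(k-1)s)]`. -/
theorem beta_process_size_biased_rate_negBinom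
    (d : ℝ) (hd0 : 0 < d) (hd1 : d < 1) (s : ℕ) (hs : 1 ≤ s) :
    (∀ a : ℝ, d < a →
      ∫ θ in (0:ℝ)..1, θ ^ (-1 - d) * ((1 - θ) ^ (a - 1) - (1 - θ) ^ (a + (s : ℝ) - 1))
        = Real.Gamma (1 - d) / d *
            (Real.Gamma (a + (s : ℝ)) / Real.Gamma (a + (s : ℝ) - d)
              - Real.Gamma a / Real.Gamma (a - d))) ∧
    (∀ γ α : ℝ, 0 < γ → ∀ k : ℕ, 1 ≤ k → d < α + d + ((k : ℝ) - 1) * (s : ℝ) →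
      γ * (Real.Gamma (α + 1) / (Real.Gamma (1 - d) * Real.Gamma (α + d))) *
          ∫ θ in (0:ℝ)..1, θ ^ (-1 - d) *
            ((1 - θ) ^ (α + d + ((k : ℝ) - 1) * (s : ℝ) - 1)
              - (1 - θ) ^ (α + d + (k : ℝ) * (s : ℝ) - 1))
        = γ / d * (Real.Gamma (α + 1) / Real.Gamma (α + d)) *
            (Real.Gamma (α + d + (k : ℝ) * (s : ℝ)) / Real.Gamma (α + (k : ℝ) * (s : ℝ))
              - Real.Gamma (α + d + ((k : ℝ) - 1) * (s : ℝ)) /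
                  Real.Gamma (α + ((k : ℝ) - 1) * (s : ℝ)))) := by
  constructor
  · exact fun a ha => myPart1 d hd0 hd1 s hs a ha
  · intro γ α hγ k hk ha
    have hc : Gamma (1 - d) ≠ 0 := (Gamma_pos_of_pos (by linarith)).ne'
    have key : ∀ X p q : ℝ,
        γ * (p / (Gamma (1-d) * q)) * (Gamma (1-d) / d * X) = γ / d * (p / q) * X := by
      intro X p q
      rcases eq_or_ne q 0 with h | h
      · simp [h]
      · field_simp
    rw [show α + d + (k:ℝ) * (s:ℝ) - 1 = α + d + ((k:ℝ) - 1) * (s:ℝ) + (s:ℝ) - 1 from by ring,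
      myPart1 d hd0 hd1 s hs (α + d + ((k:ℝ) - 1) * (s:ℝ)) ha,
      show α + d + ((k:ℝ) - 1) * (s:ℝ) + (s:ℝ) - d = α + (k:ℝ) * (s:ℝ) from by ring,
      show α + d + ((k:ℝ) - 1) * (s:ℝ) + (s:ℝ) = α + d + (k:ℝ) * (s:ℝ) from by ring,
      show α + d + ((k:ℝ) - 1) * (s:ℝ) - d = α + ((k:ℝ) - 1) * (s:ℝ) from by ring]
    exact key _ _ _
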